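/- Let α, β, f be reals with α² + β² = 1, 0 < f ≤ 1, β > 0. Setting q = 1/2 + (1/2)·√(f²α²(1-f²)/(1-f²α²)) and s_z = fα/2 + q/(fα) - 1/(2fα) (assuming α > 0 and f²α² > 1 - fβ), the pair (q, s_z) satisfies both constraints s_z² + f²β²/4 = q² and (fα - s_z)² + f²β²/4 = (1-q)². -/

import Mathlib

/-- achievability of the optimum in Theorem 2 for f > f*. -/
theorem stmt6 (α β f : ℝ) (hαβ : α ^ 2 + β ^ 2 = 1)
    (hf0 : 0 < f) (hf1 : f ≤ 1) (hβ : 0 < β) (hα : 0 < α)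
    (hcase : 1 - f * β < f ^ 2 * α ^ 2)
    (q s_z : ℝ)
    (hq : q = 1/2 + (1/2) * Real.sqrt (f ^ 2 * α ^ 2 * (1 - f ^ 2) / (1 - f ^ 2 * α ^ 2)))
    (hsz : s_z = f * α / 2 + q / (f * α) - 1 / (2 * (f * α))) :
    s_z ^ 2 + f ^ 2 * β ^ 2 / 4 = q ^ 2 ∧
      (f * α - s_z) ^ 2 + f ^ 2 * β ^ 2 / 4 = (1 - q) ^ 2 := by
  have hf2 : f ^ 2 ≤ 1 := by nlinarith
  have hα1 : α ^ 2 < 1 := by nlinarith [mul_pos hβ hβ]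
  have hden : 0 < 1 - f ^ 2 * α ^ 2 := by
    nlinarith [mul_nonneg (by linarith : (0:ℝ) ≤ 1 - f ^ 2) (sq_nonneg α)]
  have hnum : 0 ≤ f ^ 2 * α ^ 2 * (1 - f ^ 2) :=
    mul_nonneg (mul_nonneg (sq_nonneg f) (sq_nonneg α)) (by linarith)
  set r := Real.sqrt (f ^ 2 * α ^ 2 * (1 - f ^ 2) / (1 - f ^ 2 * α ^ 2)) with hr
  have hr2 : r ^ 2 * (1 - f ^ 2 * α ^ 2) = f ^ 2 * α ^ 2 * (1 - f ^ 2) := by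
    have h := Real.sq_sqrt (div_nonneg hnum hden.le)
    rw [← hr] at h
    rw [← Real.rpow_natCast] at h ⊢
    push_cast at h ⊢
    rw [h]
    field_simp
  have hfα : f * α ≠ 0 := by positivity
  subst hsz hq
  constructor <;> field_simp <;>
    linear_combination 4 * hr2 + (4 * f ^ 4 * α ^ 2) * hαβ
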